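/- Let [s i, e i), i : Fin n, be half-open real intervals with s i < e i, let u : Fin n → ℕ be capacities, C : ℕ a bound, and p : Fin n → ℝ nonnegative weights. If x : Fin n → ℝ satisfies 0 ≤ x i ≤ u i for all i and, for every t : ℝ, ∑_{i : s i ≤ t < e i} x i ≤ C, then there exists y : Fin n → ℕ with y i ≤ u i for all i, ∑_{i : s i ≤ t < e i} y i ≤ C for every t : ℝ, and ∑ i, p i * y i ≥ ∑ i, p i * x i. -/

import Mathlib

open Finset

/-- A real number that is an integer. -/
def TUIsInt (r : ℝ) : Prop := ∃ z : ℤ, r = z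

lemma TUIsInt.add {a b : ℝ} (ha : TUIsInt a) (hb : TUIsInt b) : TUIsInt (a + b) := by
  obtain ⟨z, rfl⟩ := ha; obtain ⟨w, rfl⟩ := hb; exact ⟨z + w, by push_cast; ring⟩

lemma TUIsInt.mul {a b : ℝ} (ha : TUIsInt a) (hb : TUIsInt b) : TUIsInt (a * b) := by
  obtain ⟨z, rfl⟩ := ha; obtain ⟨w, rfl⟩ := hb; exact ⟨z * w, by push_cast; ring⟩

lemma TUIsInt.neg {a : ℝ} (ha : TUIsInt a) : TUIsInt (-a) := by
  obtain ⟨z, rfl⟩ := ha; exact ⟨-z, by push_cast; ring⟩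

lemma TUIsInt.sub {a b : ℝ} (ha : TUIsInt a) (hb : TUIsInt b) : TUIsInt (a - b) := by
  rw [sub_eq_add_neg]; exact ha.add hb.neg

lemma TUIsInt.zero : TUIsInt 0 := ⟨0, by norm_num⟩

lemma TUIsInt.sum {ι : Type*} (t : Finset ι) (f : ι → ℝ) (h : ∀ i ∈ t, TUIsInt (f i)) :
    TUIsInt (∑ i ∈ t, f i) := by
  classical
  induction t using Finset.induction with
  | empty => simpa using TUIsInt.zero
  | insert _ _ hj ih =>
    rw [Finset.sum_insert hj]
    exact (h _ (Finset.mem_insert_self _ _)).add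
      (ih fun i hi => h i (Finset.mem_insert_of_mem hi))

/-- A lower (downward closed) subset of `Fin k` consists exactly of indices below its card. -/
lemma TU_lower_card {k : ℕ} (P : Fin k → Prop) [DecidablePred P]
    (hP : ∀ i i' : Fin k, i ≤ i' → P i' → P i) (i : Fin k) :
    P i ↔ (i : ℕ) < (univ.filter P).card := by
  constructor
  · intro hi
    have hsub : Finset.Iic i ⊆ univ.filter P := fun j hj =>
      Finset.mem_filter.mpr ⟨Finset.mem_univ _, hP j i (Finset.mem_Iic.mp hj) hi⟩
    have := Finset.card_le_card hsub
    have hIic : (Finset.Iic i).card = (i : ℕ) + 1 := by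
      exact Fin.card_Iic i
    omega
  · intro hi
    by_contra hPi
    have hsub : univ.filter P ⊆ Finset.Iio i := by
      intro j hj
      rcases Finset.mem_filter.mp hj with ⟨-, hPj⟩
      rcases lt_or_ge j i with h | h
      · exact Finset.mem_Iio.mpr h
      · exact absurd (hP i j h hPj) hPi
    have := Finset.card_le_card hsub
    have hIio : (Finset.Iio i).card = (i : ℕ) := by
      exact Fin.card_Iio i
    omega

/-- Interval matrix: each column is the indicator of an interval of row indices. -/
def TUIsIntvl (M : Matrix (Fin k) (Fin m) ℝ) : Prop :=
  ∀ j, ∃ a b : ℕ, ∀ i, M i j = if a ≤ (i : ℕ) ∧ (i : ℕ) < b then 1 else 0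


lemma TUIsIntvl.zero_one {M : Matrix (Fin k) (Fin m) ℝ} (h : TUIsIntvl M) (i j) :
    M i j = 0 ∨ M i j = 1 := by
  obtain ⟨a, b, hab⟩ := h j
  rw [hab]; split <;> simp

lemma TUIsIntvl.submatrix {M : Matrix (Fin k) (Fin m) ℝ} (h : TUIsIntvl M)
    (f : Fin k' → Fin k) (hf : Monotone f) (g : Fin m' → Fin m) :
    TUIsIntvl (M.submatrix f g) := by
  intro j
  obtain ⟨a, b, hab⟩ := h (g j)
  refine ⟨(univ.filter (fun i : Fin k' => ((f i : ℕ) < a))).card,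
          (univ.filter (fun i : Fin k' => ((f i : ℕ) < b))).card, fun i => ?_⟩
  have hlow : ∀ c : ℕ, ∀ i i' : Fin k', i ≤ i' → ((f i' : ℕ) < c) → ((f i : ℕ) < c) :=
    fun c i i' hii h' => lt_of_le_of_lt (by exact_mod_cast Fin.le_iff_val_le_val.mp (hf hii)) h'
  have ha := TU_lower_card (fun i : Fin k' => ((f i : ℕ) < a)) (hlow a) i
  have hb := TU_lower_card (fun i : Fin k' => ((f i : ℕ) < b)) (hlow b) i
  rw [Matrix.submatrix_apply, hab]
  refine if_congr ?_ rfl rfl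
  constructor
  · rintro ⟨h1, h2⟩
    refine ⟨le_of_not_gt (fun hc => ?_), hb.mp h2⟩
    exact absurd (ha.mpr hc) (not_lt.mpr h1)
  · rintro ⟨h1, h2⟩
    refine ⟨le_of_not_gt (fun hc => ?_), hb.mpr h2⟩
    exact absurd (ha.mp hc) (not_lt.mpr h1)

/-- Subtracting column `j0` from each column in `S` does not change the determinant. -/
lemma TU_det_sub_cols (M : Matrix (Fin k) (Fin k) ℝ) (j0 : Fin k) (S : Finset (Fin k))
    (hS : j0 ∉ S) :
    (Matrix.of fun i j => if j ∈ S then M i j - M i j0 else M i j).det = M.det := by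
  classical
  induction S using Finset.induction with
  | empty =>
    have : (Matrix.of fun i j => if j ∈ (∅ : Finset (Fin k)) then M i j - M i j0 else M i j) = M := by
      ext i j; simp
    rw [this]
  | @insert a S' ha ih =>
    have hj0a : j0 ≠ a := fun h => hS (h ▸ Finset.mem_insert_self a S')
    have hj0S' : j0 ∉ S' := fun h => hS (Finset.mem_insert_of_mem h)
    set P : Matrix (Fin k) (Fin k) ℝ := Matrix.of fun i j => if j ∈ S' then M i j - M i j0 else M i j with hP
    have key : (Matrix.of fun i j => if j ∈ insert a S' then M i j - M i j0 else M i j)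
        = P.updateCol a (fun i => P i a + (-1 : ℝ) • P i j0) := by
      ext i j
      by_cases hja : j = a
      · subst hja
        rw [Matrix.updateCol_self]
        simp only [Matrix.of_apply, smul_eq_mul, neg_one_mul, P]
        rw [if_pos (Finset.mem_insert_self j S'), if_neg ha, if_neg hj0S']
        ring
      · rw [Matrix.updateCol_ne hja]
        simp only [Matrix.of_apply, Finset.mem_insert, P]
        by_cases hjS : j ∈ S' <;> simp [hjS, hja]
    rw [key, Matrix.det_updateCol_add_smul_self P (Ne.symm hj0a) (-1 : ℝ), ih hj0S']


/-- Columns containing row 0 are prefix indicators. -/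
lemma TUIsIntvl.prefix_col {k m : ℕ} {M : Matrix (Fin (k+1)) (Fin m) ℝ} (h : TUIsIntvl M)
    {j : Fin m} (hj : M 0 j = 1) (i : Fin (k+1)) :
    M i j = if (i : ℕ) < (univ.filter (fun i => M i j = 1)).card then 1 else 0 := by
  classical
  obtain ⟨a, b, hab⟩ := h j
  have ha : a = 0 ∧ 0 < b := by
    by_contra hcon
    rw [hab 0] at hj
    simp only [Fin.val_zero] at hj
    by_cases hc : a ≤ 0 ∧ 0 < b
    · exact hcon ⟨Nat.le_zero.mp (by omega), by omega⟩
    · simp [hc] at hj; exact hc ⟨by omega, by omega⟩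
  have hlow : ∀ i i' : Fin (k+1), i ≤ i' → M i' j = 1 → M i j = 1 := by
    intro i i' hii hMi'
    rw [hab] at hMi' ⊢
    split at hMi'
    · rename_i hc
      rw [if_pos ⟨by omega, by exact lt_of_le_of_lt (by exact_mod_cast hii) hc.2⟩]
    · norm_num at hMi'
  have hl := TU_lower_card (fun i => M i j = 1) hlow i
  rcases (TUIsIntvl.zero_one h i j : M i j = 0 ∨ M i j = 1) with h0 | h1
  · rw [h0]
    by_cases hc : (i : ℕ) < (univ.filter (fun i => M i j = 1)).card
    · exact absurd (hl.mpr hc) (by rw [h0]; norm_num)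
    · rw [if_neg hc]
  · rw [h1, if_pos (hl.mp h1)]

lemma TU_det {k : ℕ} (M : Matrix (Fin k) (Fin k) ℝ) (h : TUIsIntvl M) :
    M.det = 0 ∨ M.det = 1 ∨ M.det = -1 := by
  classical
  induction k with
  | zero => right; left; exact Matrix.det_fin_zero
  | succ k ih =>
    set Jset : Finset (Fin (k+1)) := univ.filter (fun j => M 0 j = 1) with hJset
    by_cases hJ : Jset.Nonempty
    · -- pick j0 in Jset with minimal number of ones
      obtain ⟨j0, hj0J, hj0min⟩ := Finset.exists_min_image Jset
        (fun j => (univ.filter (fun i => M i j = 1)).card) hJ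
      have hj0 : M 0 j0 = 1 := (Finset.mem_filter.mp hj0J).2
      set c : Fin (k+1) → ℕ := fun j => (univ.filter (fun i => M i j = 1)).card with hc
      set N : Matrix (Fin (k+1)) (Fin (k+1)) ℝ :=
        Matrix.of fun i j => if j ∈ Jset.erase j0 then M i j - M i j0 else M i j with hN
      have hdetN : N.det = M.det := TU_det_sub_cols M j0 _ (fun hmem => (Finset.mem_erase.mp hmem).1 rfl)
      have hNIntvl : TUIsIntvl N := by
        intro j
        by_cases hje : j ∈ Jset.erase j0
        · have hjJ : M 0 j = 1 := (Finset.mem_filter.mp (Finset.mem_of_mem_erase hje)).2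
          have hcle : c j0 ≤ c j := hj0min j (Finset.mem_of_mem_erase hje)
          refine ⟨c j0, c j, fun i => ?_⟩
          have h1 := h.prefix_col hjJ i
          have h2 := h.prefix_col hj0 i
          simp only [hN, Matrix.of_apply, if_pos hje]
          rw [h1, h2]
          by_cases hb : (i : ℕ) < c j0
          · rw [if_pos hb, if_pos (lt_of_lt_of_le hb hcle), if_neg (by omega)]; ring
          · by_cases hb2 : (i : ℕ) < c j
            · rw [if_neg hb, if_pos hb2, if_pos ⟨by omega, hb2⟩]; ring
            · rw [if_neg hb, if_neg hb2, if_neg (by omega)]; ring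
        · obtain ⟨a, b, hab⟩ := h j
          exact ⟨a, b, fun i => by simp only [hN, Matrix.of_apply, if_neg hje]; exact hab i⟩
      -- first row of N is zero except at j0
      have hNrow : ∀ j, j ≠ j0 → N 0 j = 0 := by
        intro j hj
        by_cases hje : j ∈ Jset.erase j0
        · have hjJ : M 0 j = 1 := (Finset.mem_filter.mp (Finset.mem_of_mem_erase hje)).2
          simp only [hN, Matrix.of_apply, if_pos hje, hjJ, hj0]; ring
        · have hjJ : j ∉ Jset := fun hmem => hje (Finset.mem_erase.mpr ⟨hj, hmem⟩)
          have : M 0 j ≠ 1 := fun h1 => hjJ (Finset.mem_filter.mpr ⟨Finset.mem_univ _, h1⟩)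
          simp only [hN, Matrix.of_apply, if_neg hje]
          rcases h.zero_one 0 j with h0 | h1
          · exact h0
          · exact absurd h1 this
      have hNj0 : N 0 j0 = 1 := by
        simp only [hN, Matrix.of_apply, if_neg (Finset.notMem_erase j0 Jset)]; exact hj0
      have hminor : TUIsIntvl (N.submatrix Fin.succ j0.succAbove) :=
        hNIntvl.submatrix Fin.succ (Fin.strictMono_succ.monotone) j0.succAbove
      have hdet2 : N.det = (-1 : ℝ) ^ (j0 : ℕ) * (N.submatrix Fin.succ j0.succAbove).det := by
        rw [Matrix.det_succ_row_zero]
        rw [Finset.sum_eq_single j0]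
        · rw [hNj0]; ring
        · intro j _ hj; rw [hNrow j hj]; ring
        · intro hj; exact absurd (Finset.mem_univ j0) hj
      rw [← hdetN, hdet2]
      rcases ih _ hminor with h0 | h1 | hm1
      · left; rw [h0]; ring
      · rcases neg_one_pow_eq_or ℝ (j0 : ℕ) with hp | hp
        · right; left; rw [h1, hp]; ring
        · right; right; rw [h1, hp]; ring
      · rcases neg_one_pow_eq_or ℝ (j0 : ℕ) with hp | hp
        · right; right; rw [hm1, hp]; ring
        · right; left; rw [hm1, hp]; ring
    · left
      apply Matrix.det_eq_zero_of_row_eq_zero 0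
      intro j
      have : j ∉ Jset := fun hmem => hJ ⟨j, hmem⟩
      have h1 : M 0 j ≠ 1 := fun h1 => this (Finset.mem_filter.mpr ⟨Finset.mem_univ _, h1⟩)
      rcases h.zero_one 0 j with h0 | hh1
      · exact h0
      · exact absurd hh1 h1

lemma TU_det_int {k : ℕ} (M : Matrix (Fin k) (Fin k) ℝ) (h : TUIsIntvl M) :
    TUIsInt M.det := by
  rcases TU_det M h with h0 | h1 | hm1
  · exact ⟨0, by rw [h0]; norm_num⟩
  · exact ⟨1, by rw [h1]; norm_num⟩
  · exact ⟨-1, by rw [hm1]; norm_num⟩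

lemma TU_adjugate_int {k : ℕ} (M : Matrix (Fin k) (Fin k) ℝ) (h : TUIsIntvl M) (i j : Fin k) :
    TUIsInt (M.adjugate i j) := by
  classical
  cases k with
  | zero => exact i.elim0
  | succ k' =>
    rw [Matrix.adjugate_apply, Matrix.det_succ_row _ j]
    apply TUIsInt.sum
    intro j' _
    have hrow : (M.updateRow j (Pi.single i 1)).submatrix j.succAbove j'.succAbove
        = M.submatrix j.succAbove j'.succAbove := by
      ext a b
      simp only [Matrix.submatrix_apply]
      rw [Matrix.updateRow_ne (Fin.succAbove_ne j a)]
    have hd : TUIsInt ((M.updateRow j (Pi.single i 1)).submatrix j.succAbove j'.succAbove).det := by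
      rw [hrow]
      exact TU_det_int _ (h.submatrix _ (Fin.strictMono_succAbove j).monotone _)
    have hentry : TUIsInt ((M.updateRow j (Pi.single i 1)) j j') := by
      rw [Matrix.updateRow_self]
      by_cases hji : j' = i
      · subst hji; exact ⟨1, by simp⟩
      · exact ⟨0, by simp [Pi.single_apply, hji]⟩
    have hsign : TUIsInt ((-1 : ℝ) ^ ((j : ℕ) + (j' : ℕ))) := by
      rcases neg_one_pow_eq_or ℝ ((j : ℕ) + (j' : ℕ)) with hp | hp
      · exact ⟨1, by rw [hp]; norm_num⟩
      · exact ⟨-1, by rw [hp]; norm_num⟩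
    exact (hsign.mul hentry).mul hd

lemma TU_solve {k : ℕ} (M : Matrix (Fin k) (Fin k) ℝ) (h : TUIsIntvl M) (hdet : M.det ≠ 0)
    (v c : Fin k → ℝ) (hc : ∀ i, TUIsInt (c i)) (hMv : M.mulVec v = c) (j : Fin k) :
    TUIsInt (v j) := by
  classical
  have key : M.adjugate.mulVec c = M.det • v := by
    rw [← hMv, Matrix.mulVec_mulVec, Matrix.adjugate_mul, Matrix.smul_mulVec,
      Matrix.one_mulVec]
  have hint : TUIsInt (M.adjugate.mulVec c j) := by
    rw [Matrix.mulVec, dotProduct]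
    apply TUIsInt.sum
    intro q _
    exact (TU_adjugate_int M h j q).mul (hc q)
  have hval : M.adjugate.mulVec c j = M.det * v j := by
    rw [key]; simp
  rcases TU_det M h with h0 | h1 | hm1
  · exact absurd h0 hdet
  · rw [hval, h1, one_mul] at hint; exact hint
  · rw [hval, hm1] at hint
    have h2 := hint.neg
    have h3 : -(-1 * v j) = v j := by ring
    rwa [h3] at h2

open scoped Classical


variable {n : ℕ}

noncomputable def TUrow (s e : Fin n → ℝ) (i : Fin n) : Finset (Fin n) :=
  univ.filter (fun j => s j ≤ s i ∧ s i < e j)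

noncomputable def TUFrac (x : Fin n → ℝ) : Finset (Fin n) :=
  univ.filter (fun i => ¬ TUIsInt (x i))

lemma TU_isIntvl_of_monotone {k m : ℕ} (v : Fin m → ℝ) (hv : Monotone v) (lo hi : Fin k → ℝ) :
    TUIsIntvl (Matrix.of fun (p : Fin m) (q : Fin k) =>
      if lo q ≤ v p ∧ v p < hi q then (1:ℝ) else 0) := by
  intro q
  refine ⟨(univ.filter (fun p => v p < lo q)).card,
    (univ.filter (fun p => v p < hi q)).card, fun p => ?_⟩
  have hlow : ∀ c : ℝ, ∀ p p' : Fin m, p ≤ p' → v p' < c → v p < c :=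
    fun c p p' h h' => lt_of_le_of_lt (hv h) h'
  have ha := TU_lower_card (fun p => v p < lo q) (hlow _) p
  have hb := TU_lower_card (fun p => v p < hi q) (hlow _) p
  simp only [Matrix.of_apply]
  refine if_congr ?_ rfl rfl
  constructor
  · rintro ⟨h1, h2⟩
    refine ⟨le_of_not_gt (fun hc => ?_), hb.mp h2⟩
    exact absurd (ha.mpr hc) (not_lt.mpr h1)
  · rintro ⟨h1, h2⟩
    refine ⟨le_of_not_gt (fun hc => ?_), hb.mpr h2⟩
    exact absurd (ha.mp hc) (not_lt.mpr h1)

/-- Key summation identity: restricting a row sum to an enumerated subset. -/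
lemma TU_row_sum (s e : Fin n → ℝ) (F : Finset (Fin n)) {k : ℕ} (eF : Fin k → Fin n)
    (himg : ∀ q, eF q ∈ F) (hinj : Function.Injective eF)
    (hsurj : ∀ j ∈ F, ∃ q, eF q = j) (i : Fin n) (f : Fin n → ℝ) :
    ∑ q : Fin k, (if s (eF q) ≤ s i ∧ s i < e (eF q) then (1:ℝ) else 0) * f (eF q)
      = ∑ j ∈ (TUrow s e i).filter (· ∈ F), f j := by
  have h1 : ∀ q : Fin k,
      (if s (eF q) ≤ s i ∧ s i < e (eF q) then (1:ℝ) else 0) * f (eF q)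
        = if eF q ∈ TUrow s e i then f (eF q) else 0 := by
    intro q
    have hiff : eF q ∈ TUrow s e i ↔ (s (eF q) ≤ s i ∧ s i < e (eF q)) := by
      simp [TUrow]
    by_cases hc : s (eF q) ≤ s i ∧ s i < e (eF q)
    · rw [if_pos hc, if_pos (hiff.mpr hc), one_mul]
    · rw [if_neg hc, if_neg (fun hm => hc (hiff.mp hm)), zero_mul]
  rw [Finset.sum_congr rfl (fun q _ => h1 q), ← Finset.sum_filter]
  refine Finset.sum_bij (fun q _ => eF q) ?_ ?_ ?_ ?_
  · intro q hq
    exact Finset.mem_filter.mpr ⟨(Finset.mem_filter.mp hq).2, himg q⟩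
  · intro q1 _ q2 _ hq; exact hinj hq
  · intro j hj
    obtain ⟨hrow, hF⟩ := Finset.mem_filter.mp hj
    obtain ⟨q, rfl⟩ := hsurj j hF
    exact ⟨q, Finset.mem_filter.mpr ⟨Finset.mem_univ _, hrow⟩, rfl⟩
  · intro q _; rfl

/-- Helper: surjectivity-style enumeration of a finset. -/
lemma TU_enum (F : Finset (Fin n)) :
    ∃ eF : Fin F.card → Fin n, (∀ q, eF q ∈ F) ∧ Function.Injective eF ∧
      (∀ j ∈ F, ∃ q, eF q = j) := by
  refine ⟨fun q => (F.orderIsoOfFin rfl q : Fin n), fun q => (F.orderIsoOfFin rfl q).2,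
    ?_, ?_⟩
  · intro a b hab
    exact (F.orderIsoOfFin rfl).injective (Subtype.ext hab)
  · intro j hj
    exact ⟨(F.orderIsoOfFin rfl).symm ⟨j, hj⟩, by
      have := (F.orderIsoOfFin rfl).apply_symm_apply ⟨j, hj⟩
      exact congrArg Subtype.val this⟩

/-- Sorted enumeration of a finset (sorted by the values of `s`). -/
lemma TU_enum_sorted (s : Fin n → ℝ) (F : Finset (Fin n)) :
    ∃ eF : Fin F.card → Fin n, (∀ q, eF q ∈ F) ∧ Function.Injective eF ∧
      (∀ j ∈ F, ∃ q, eF q = j) ∧ Monotone (fun q => s (eF q)) := by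
  obtain ⟨e0, himg, hinj, hsurj⟩ := TU_enum F
  set σ := Tuple.sort (fun p => s (e0 p)) with hσ
  refine ⟨fun q => e0 (σ q), fun q => himg _, ?_, ?_, ?_⟩
  · intro a b hab
    exact σ.injective (hinj hab)
  · intro j hj
    obtain ⟨q, rfl⟩ := hsurj j hj
    exact ⟨σ.symm q, by show e0 (σ (σ.symm q)) = e0 q; rw [Equiv.apply_symm_apply]⟩
  · exact Tuple.monotone_sort (fun p => s (e0 p))

/-- Case B: if the kernel of the tight submatrix restricted to fractional columns is
trivial, we get a contradiction (the fractional variables would be integral). -/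
lemma TU_caseB (s e : Fin n → ℝ) (C : ℕ) (x : Fin n → ℝ)
    (hFne : (TUFrac x).Nonempty) :
    ∀ (m : ℕ) (R : Finset (Fin n)), R.card ≤ m →
      (∀ i ∈ R, ∑ j ∈ TUrow s e i, x j = (C : ℝ)) →
      (∀ d : Fin n → ℝ, (∀ i, i ∉ TUFrac x → d i = 0) →
        (∀ i ∈ R, ∑ j ∈ TUrow s e i, d j = 0) → d = 0) →
      False := by
  set F := TUFrac x with hF
  set k := F.card with hk
  have hk1 : 1 ≤ k := Finset.card_pos.mpr hFne
  obtain ⟨eF, himgF, hinjF, hsurjF⟩ := TU_enum F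
  intro m
  induction m using Nat.strong_induction_on with
  | _ m ih =>
    intro R hcard htight hker
    obtain ⟨eR, himgR, hinjR, hsurjR, hmonR⟩ := TU_enum_sorted s R
    set B : Matrix (Fin R.card) (Fin k) ℝ := Matrix.of fun p q =>
      if s (eF q) ≤ s (eR p) ∧ s (eR p) < e (eF q) then (1:ℝ) else 0 with hB
    have hBIntvl : TUIsIntvl B :=
      TU_isIntvl_of_monotone (fun p => s (eR p)) hmonR (fun q => s (eF q)) (fun q => e (eF q))
    -- the row sums of functions supported on F
    have hrowsum : ∀ (p : Fin R.card) (f : Fin n → ℝ),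
        ∑ q, B p q * f (eF q) = ∑ j ∈ (TUrow s e (eR p)).filter (· ∈ F), f j := by
      intro p f
      exact TU_row_sum s e F eF himgF hinjF hsurjF (eR p) f
    have hrowsum' : ∀ (p : Fin R.card) (f : Fin n → ℝ), (∀ i, i ∉ F → f i = 0) →
        ∑ q, B p q * f (eF q) = ∑ j ∈ TUrow s e (eR p), f j := by
      intro p f hf
      rw [hrowsum p f]
      refine Finset.sum_subset (Finset.filter_subset _ _) ?_
      intro j hj1 hj2
      exact hf j (fun hjF => hj2 (Finset.mem_filter.mpr ⟨hj1, hjF⟩))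
    -- triviality of the kernel of B
    have hker' : ∀ w : Fin k → ℝ, B.mulVec w = 0 → w = 0 := by
      intro w hw
      haveI : Nonempty (Fin k) := ⟨⟨0, hk1⟩⟩
      set d : Fin n → ℝ := fun i => if i ∈ F then w (Function.invFun eF i) else 0 with hd
      have hdF : ∀ q, d (eF q) = w q := by
        intro q
        simp only [hd]
        rw [if_pos (himgF q)]
        exact congrArg w (Function.leftInverse_invFun hinjF q)
      have hsupp : ∀ i, i ∉ F → d i = 0 := fun i hi => if_neg hi
      have hrow0 : ∀ i ∈ R, ∑ j ∈ TUrow s e i, d j = 0 := by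
        intro i hiR
        obtain ⟨p, rfl⟩ := hsurjR i hiR
        rw [← hrowsum' p d hsupp]
        have heq : ∀ q, B p q * d (eF q) = B p q * w q := fun q => by rw [hdF q]
        rw [Finset.sum_congr rfl (fun q _ => heq q)]
        have := congrFun hw p
        simpa [Matrix.mulVec, dotProduct] using this
      have hd0 := hker d hsupp hrow0
      funext q
      rw [← hdF q, hd0]
      rfl
    rcases lt_trichotomy R.card k with hlt | heq | hgt
    · -- too few tight rows: B injective impossible
      have hinjL : Function.Injective (Matrix.mulVecLin B) := by
        rw [← LinearMap.ker_eq_bot]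
        exact LinearMap.ker_eq_bot'.mpr (fun w hw => hker' w hw)
      have hle := LinearMap.finrank_le_finrank_of_injective hinjL
      rw [Module.finrank_pi, Module.finrank_pi] at hle
      simp only [Fintype.card_fin] at hle
      omega
    · -- square case: Cramer gives integrality of the fractional variables
      set B' : Matrix (Fin k) (Fin k) ℝ := B.submatrix (fun p : Fin k => Fin.cast heq.symm p) id
        with hB'
      have hB'Intvl : TUIsIntvl B' := by
        apply hBIntvl.submatrix
        · intro a b hab
          exact hab
      have hB'ker : ∀ w : Fin k → ℝ, B'.mulVec w = 0 → w = 0 := by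
        intro w hw
        apply hker'
        funext p
        have := congrFun hw (Fin.cast heq p)
        simpa [Matrix.mulVec, dotProduct, hB'] using this
      have hdet : B'.det ≠ 0 := by
        intro hdet0
        obtain ⟨w, hw0, hw⟩ := Matrix.exists_mulVec_eq_zero_iff.mpr hdet0
        exact hw0 (hB'ker w hw)
      set vx : Fin k → ℝ := fun q => x (eF q) with hvx
      set cx : Fin k → ℝ := fun p' =>
        (C : ℝ) - ∑ j ∈ (TUrow s e (eR (Fin.cast heq.symm p'))).filter (fun j => j ∉ F), x j
        with hcx
      have hMv : B'.mulVec vx = cx := by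
        funext p'
        have hsplit := Finset.sum_filter_add_sum_filter_not
          (TUrow s e (eR (Fin.cast heq.symm p'))) (· ∈ F) x
        have htightp := htight (eR (Fin.cast heq.symm p')) (himgR _)
        have hstep : B'.mulVec vx p' = ∑ q, B (Fin.cast heq.symm p') q * x (eF q) := by
          simp [Matrix.mulVec, dotProduct, hB', hvx]
        rw [hstep, hrowsum _ x]
        have hC : (∑ j ∈ (TUrow s e (eR (Fin.cast heq.symm p'))).filter (· ∈ F), x j)
            + ∑ j ∈ (TUrow s e (eR (Fin.cast heq.symm p'))).filter (fun j => j ∉ F), x j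
            = (C : ℝ) := by rw [hsplit]; exact htightp
        simp only [hcx]
        linarith
      have hcint : ∀ p', TUIsInt (cx p') := by
        intro p'
        refine TUIsInt.sub ⟨(C : ℤ), by push_cast; ring⟩ ?_
        refine TUIsInt.sum _ _ ?_
        intro j hj
        have hjF : j ∉ F := (Finset.mem_filter.mp hj).2
        have hnn : ¬ ¬ TUIsInt (x j) := by
          intro hni
          exact hjF (Finset.mem_filter.mpr ⟨Finset.mem_univ _, hni⟩)
        exact not_not.mp hnn
      have hxint := TU_solve B' hB'Intvl hdet vx cx hcint hMv ⟨0, hk1⟩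
      have hq0 : eF ⟨0, hk1⟩ ∈ F := himgF _
      exact (Finset.mem_filter.mp hq0).2 hxint
    · -- too many tight rows: drop a dependent row
      have hnli : ¬ LinearIndependent ℝ (fun p : Fin R.card => (fun q => B p q)) := by
        intro hli
        have hle := hli.fintype_card_le_finrank
        rw [Module.finrank_pi] at hle
        simp only [Fintype.card_fin] at hle
        omega
      obtain ⟨g, hgsum, p0, hgp0⟩ := Fintype.not_linearIndependent_iff.mp hnli
      set R' := R.erase (eR p0) with hR'
      have hcard' : R'.card = R.card - 1 := by
        rw [hR', Finset.card_erase_of_mem (himgR p0)]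
      have hq : ∀ q, ∑ p, g p * B p q = 0 := by
        intro q
        have := congrFun hgsum q
        simpa [Finset.sum_apply, Pi.smul_apply, smul_eq_mul] using this
      refine ih (m - 1) (by omega) R' (by omega) ?_ ?_
      · intro i hiR'
        exact htight i (Finset.mem_of_mem_erase hiR')
      · intro d hsupp hrow'
        apply hker d hsupp
        intro i hiR
        obtain ⟨p, rfl⟩ := hsurjR i hiR
        by_cases hp : p = p0
        · subst hp
          -- derive the missing row from the linear dependence
          have hcomm : ∑ p', g p' * ∑ q, B p' q * d (eF q) = 0 := by
            have hswap : ∑ p', g p' * ∑ q, B p' q * d (eF q)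
                = ∑ q, (∑ p', g p' * B p' q) * d (eF q) := by
              simp_rw [Finset.mul_sum]
              rw [Finset.sum_comm]
              refine Finset.sum_congr rfl fun q _ => ?_
              rw [Finset.sum_mul]
              exact Finset.sum_congr rfl fun p' _ => by ring
            rw [hswap]
            simp only [hq, zero_mul, Finset.sum_const_zero]
          have hothers : ∀ p', p' ≠ p → g p' * ∑ q, B p' q * d (eF q) = 0 := by
            intro p' hp'
            have hmem : eR p' ∈ R' := Finset.mem_erase.mpr
              ⟨fun hh => hp' (hinjR hh), himgR p'⟩
            rw [hrowsum' p' d hsupp, hrow' _ hmem, mul_zero]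
          rw [Finset.sum_eq_single p (fun b _ hb => hothers b hb)
            (fun hb => absurd (Finset.mem_univ p) hb)] at hcomm
          rcases mul_eq_zero.mp hcomm with h0 | h0
          · exact absurd h0 hgp0
          · rw [← hrowsum' p d hsupp]; exact h0
        · have hmem : eR p ∈ R' := Finset.mem_erase.mpr
            ⟨fun hh => hp (hinjR hh), himgR p⟩
          exact hrow' _ hmem


noncomputable def TUTight (s e : Fin n → ℝ) (C : ℕ) (x : Fin n → ℝ) : Finset (Fin n) :=
  univ.filter (fun i => ∑ j ∈ TUrow s e i, x j = (C : ℝ))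

/-- The pivoting step: given a feasible point with a fractional coordinate and an
admissible direction, move to a better feasible point with smaller measure. -/
lemma TU_pivot (s e : Fin n → ℝ) (u : Fin n → ℕ) (C : ℕ) (p : Fin n → ℝ)
    (x : Fin n → ℝ)
    (hx0 : ∀ i, 0 ≤ x i) (hxu : ∀ i, x i ≤ (u i : ℝ))
    (hxC : ∀ i, ∑ j ∈ TUrow s e i, x j ≤ (C : ℝ))
    (d : Fin n → ℝ) (hdne : d ≠ 0)
    (hsupp : ∀ i, i ∉ TUFrac x → d i = 0)
    (horth : ∀ i, (∑ j ∈ TUrow s e i, x j = (C : ℝ)) → ∑ j ∈ TUrow s e i, d j = 0)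
    (hpd : 0 ≤ ∑ i, p i * d i) :
    ∃ x' : Fin n → ℝ,
      (∀ i, 0 ≤ x' i) ∧ (∀ i, x' i ≤ (u i : ℝ)) ∧
      (∀ i, ∑ j ∈ TUrow s e i, x' j ≤ (C : ℝ)) ∧
      (∑ i, p i * x i ≤ ∑ i, p i * x' i) ∧
      (TUFrac x' ⊆ TUFrac x) ∧
      (∀ i, (∑ j ∈ TUrow s e i, x j = (C : ℝ)) → ∑ j ∈ TUrow s e i, x' j = (C : ℝ)) ∧
      (TUFrac x' ⊂ TUFrac x ∨
        ∃ i0, (∑ j ∈ TUrow s e i0, x j ≠ (C : ℝ)) ∧ (∑ j ∈ TUrow s e i0, x' j = (C : ℝ))) := by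
  -- fractional coordinates are strictly between floor and ceiling
  have hfrac_lt : ∀ i ∈ TUFrac x, x i < (⌈x i⌉ : ℝ) ∧ ((⌊x i⌋ : ℝ)) < x i := by
    intro i hi
    have hni : ¬ TUIsInt (x i) := (Finset.mem_filter.mp hi).2
    constructor
    · rcases lt_or_eq_of_le (Int.le_ceil (x i)) with h | h
      · exact h
      · exact absurd ⟨⌈x i⌉, h⟩ hni
    · rcases lt_or_eq_of_le (Int.floor_le (x i)) with h | h
      · exact h
      · exact absurd ⟨⌊x i⌋, h.symm⟩ hni
  set S1 : Finset (Fin n) := (TUFrac x).filter (fun i => d i ≠ 0) with hS1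
  set δ : Fin n → ℝ := fun i =>
    if 0 < d i then ((⌈x i⌉ : ℝ) - x i) / d i else (x i - (⌊x i⌋ : ℝ)) / (-(d i)) with hδ
  set S2 : Finset (Fin n) := univ.filter
    (fun i => (∑ j ∈ TUrow s e i, x j ≠ (C : ℝ)) ∧ 0 < ∑ j ∈ TUrow s e i, d j) with hS2
  set ρ : Fin n → ℝ := fun i =>
    ((C : ℝ) - ∑ j ∈ TUrow s e i, x j) / (∑ j ∈ TUrow s e i, d j) with hρ
  set Q : Finset ℝ := S1.image δ ∪ S2.image ρ with hQ
  have hQne : Q.Nonempty := by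
    obtain ⟨i0, hi0⟩ := Function.ne_iff.mp hdne
    have hi0F : i0 ∈ TUFrac x := by
      by_contra h
      exact hi0 (hsupp i0 h)
    exact ⟨δ i0, Finset.mem_union_left _
      (Finset.mem_image_of_mem δ (Finset.mem_filter.mpr ⟨hi0F, hi0⟩))⟩
  have hQpos : ∀ q ∈ Q, 0 < q := by
    intro q hq
    rcases Finset.mem_union.mp hq with hq | hq
    · obtain ⟨i, hiS1, rfl⟩ := Finset.mem_image.mp hq
      obtain ⟨hiF, hid⟩ := Finset.mem_filter.mp hiS1
      obtain ⟨hce, hfl⟩ := hfrac_lt i hiF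
      by_cases hdi : 0 < d i
      · rw [hδ]; simp only
        rw [if_pos hdi]
        exact div_pos (by linarith) hdi
      · have hdi' : d i < 0 := lt_of_le_of_ne (le_of_not_gt hdi) hid
        rw [hδ]; simp only
        rw [if_neg hdi]
        exact div_pos (by linarith) (by linarith)
    · obtain ⟨i, hiS2, rfl⟩ := Finset.mem_image.mp hq
      obtain ⟨-, hne, hpos⟩ := Finset.mem_filter.mp hiS2
      have hlt : ∑ j ∈ TUrow s e i, x j < (C : ℝ) := lt_of_le_of_ne (hxC i) hne
      rw [hρ]; simp only
      exact div_pos (by linarith) hpos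
  set ε : ℝ := Q.min' hQne with hε
  have hεpos : 0 < ε := hQpos _ (Q.min'_mem hQne)
  have hεle : ∀ q ∈ Q, ε ≤ q := fun q hq => Q.min'_le q hq
  set x' : Fin n → ℝ := fun i => x i + ε * d i with hx'
  -- coordinate bounds
  have hup : ∀ i, 0 < d i → x' i ≤ (⌈x i⌉ : ℝ) := by
    intro i hdi
    have hiF : i ∈ TUFrac x := by
      by_contra h
      rw [hsupp i h] at hdi; exact lt_irrefl 0 hdi
    have hmem : δ i ∈ Q := Finset.mem_union_left _
      (Finset.mem_image_of_mem δ (Finset.mem_filter.mpr ⟨hiF, ne_of_gt hdi⟩))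
    have hle := hεle _ hmem
    rw [hδ] at hle; simp only at hle
    rw [if_pos hdi] at hle
    have := (le_div_iff₀ hdi).mp hle
    simp only [hx']
    linarith
  have hdown : ∀ i, d i < 0 → (⌊x i⌋ : ℝ) ≤ x' i := by
    intro i hdi
    have hiF : i ∈ TUFrac x := by
      by_contra h
      rw [hsupp i h] at hdi; exact lt_irrefl 0 hdi
    have hmem : δ i ∈ Q := Finset.mem_union_left _
      (Finset.mem_image_of_mem δ (Finset.mem_filter.mpr ⟨hiF, ne_of_lt hdi⟩))
    have hle := hεle _ hmem
    rw [hδ] at hle; simp only at hle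
    rw [if_neg (not_lt.mpr (le_of_lt hdi))] at hle
    have := (le_div_iff₀ (by linarith : (0:ℝ) < -(d i))).mp hle
    simp only [hx']
    nlinarith
  refine ⟨x', ?_, ?_, ?_, ?_, ?_, ?_, ?_⟩
  · -- nonneg
    intro i
    rcases lt_trichotomy (d i) 0 with hdi | hdi | hdi
    · have := hdown i hdi
      have h0 : (0 : ℝ) ≤ (⌊x i⌋ : ℝ) := by
        have := Int.floor_nonneg.mpr (hx0 i)
        exact_mod_cast this
      linarith
    · simp only [hx', hdi]; simpa using hx0 i
    · have : x i ≤ x' i := by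
        simp only [hx']; nlinarith
      linarith [hx0 i]
  · -- upper bound
    intro i
    rcases lt_trichotomy (d i) 0 with hdi | hdi | hdi
    · have : x' i ≤ x i := by simp only [hx']; nlinarith
      linarith [hxu i]
    · simp only [hx', hdi]; simpa using hxu i
    · have h1 := hup i hdi
      have h2 : (⌈x i⌉ : ℝ) ≤ (u i : ℝ) := by
        have : ⌈x i⌉ ≤ (u i : ℤ) := Int.ceil_le.mpr (by exact_mod_cast hxu i)
        exact_mod_cast this
      linarith
  · -- row feasibility
    intro i
    have hlin : ∑ j ∈ TUrow s e i, x' j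
        = (∑ j ∈ TUrow s e i, x j) + ε * ∑ j ∈ TUrow s e i, d j := by
      simp only [hx', Finset.sum_add_distrib, Finset.mul_sum]
    rw [hlin]
    by_cases htight : ∑ j ∈ TUrow s e i, x j = (C : ℝ)
    · rw [horth i htight, htight]; simp
    · rcases le_or_gt (∑ j ∈ TUrow s e i, d j) 0 with hrd | hrd
      · have : ε * ∑ j ∈ TUrow s e i, d j ≤ 0 := mul_nonpos_of_nonneg_of_nonpos hεpos.le hrd
        linarith [hxC i]
      · have hmem : ρ i ∈ Q := Finset.mem_union_right _
          (Finset.mem_image_of_mem ρ (Finset.mem_filter.mpr ⟨Finset.mem_univ _, htight, hrd⟩))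
        have hle := hεle _ hmem
        rw [hρ] at hle; simp only at hle
        have := (le_div_iff₀ hrd).mp hle
        linarith
  · -- objective
    have hlin : ∑ i, p i * x' i = (∑ i, p i * x i) + ε * ∑ i, p i * d i := by
      simp only [hx', mul_add, Finset.sum_add_distrib, Finset.mul_sum]
      congr 1
      refine Finset.sum_congr rfl fun i _ => by ring
    rw [hlin]
    nlinarith
  · -- fractional set shrinks
    intro i hi
    by_contra h
    have hdi := hsupp i h
    have : x' i = x i := by simp [hx', hdi]
    have hni : ¬ TUIsInt (x' i) := (Finset.mem_filter.mp hi).2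
    rw [this] at hni
    exact h (Finset.mem_filter.mpr ⟨Finset.mem_univ _, hni⟩)
  · -- tight rows stay tight
    intro i htight
    have hlin : ∑ j ∈ TUrow s e i, x' j
        = (∑ j ∈ TUrow s e i, x j) + ε * ∑ j ∈ TUrow s e i, d j := by
      simp only [hx', Finset.sum_add_distrib, Finset.mul_sum]
    rw [hlin, horth i htight, htight]; simp
  · -- strict progress
    have hmin := Q.min'_mem hQne
    rcases Finset.mem_union.mp hmin with hm | hm
    · left
      obtain ⟨i0, hi0S1, hδi0⟩ := Finset.mem_image.mp hm
      obtain ⟨hi0F, hi0d⟩ := Finset.mem_filter.mp hi0S1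
      have hint : TUIsInt (x' i0) := by
        by_cases hdi : 0 < d i0
        · refine ⟨⌈x i0⌉, ?_⟩
          show x i0 + ε * d i0 = ((⌈x i0⌉ : ℤ) : ℝ)
          rw [hε, ← hδi0, hδ]
          simp only
          rw [if_pos hdi, div_mul_cancel₀ _ (ne_of_gt hdi)]
          ring
        · have hdi' : d i0 < 0 := lt_of_le_of_ne (le_of_not_gt hdi) hi0d
          refine ⟨⌊x i0⌋, ?_⟩
          show x i0 + ε * d i0 = ((⌊x i0⌋ : ℤ) : ℝ)
          rw [hε, ← hδi0, hδ]
          simp only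
          rw [if_neg hdi, div_neg, neg_mul, div_mul_cancel₀ _ hi0d]
          ring
      have hsub : TUFrac x' ⊆ TUFrac x := by
        intro i hi
        by_contra h
        have hdi := hsupp i h
        have hxx : x' i = x i := by simp [hx', hdi]
        have hni : ¬ TUIsInt (x' i) := (Finset.mem_filter.mp hi).2
        rw [hxx] at hni
        exact h (Finset.mem_filter.mpr ⟨Finset.mem_univ _, hni⟩)
      refine Finset.ssubset_iff_of_subset hsub |>.mpr ⟨i0, hi0F, ?_⟩
      intro hmem'
      exact (Finset.mem_filter.mp hmem').2 hint
    · right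
      obtain ⟨i0, hi0S2, hρi0⟩ := Finset.mem_image.mp hm
      obtain ⟨-, hne, hpos⟩ := Finset.mem_filter.mp hi0S2
      refine ⟨i0, hne, ?_⟩
      have hlin : ∑ j ∈ TUrow s e i0, x' j
          = (∑ j ∈ TUrow s e i0, x j) + ε * ∑ j ∈ TUrow s e i0, d j := by
        simp only [hx', Finset.sum_add_distrib, Finset.mul_sum]
      rw [hlin, hε, ← hρi0, hρ]
      simp only
      rw [div_mul_cancel₀ _ (ne_of_gt hpos)]
      ring

/-- Main induction: any feasible point can be replaced by an integral feasible point
that is at least as good. -/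
lemma TU_main (s e : Fin n → ℝ) (u : Fin n → ℕ) (C : ℕ) (p : Fin n → ℝ) :
    ∀ (N : ℕ) (x : Fin n → ℝ), (∀ i, 0 ≤ x i) → (∀ i, x i ≤ (u i : ℝ)) →
    (∀ i, ∑ j ∈ TUrow s e i, x j ≤ (C : ℝ)) →
    (TUFrac x).card * (n + 1) + (n - (TUTight s e C x).card) < N →
    ∃ x' : Fin n → ℝ, (∀ i, 0 ≤ x' i) ∧ (∀ i, x' i ≤ (u i : ℝ)) ∧
      (∀ i, ∑ j ∈ TUrow s e i, x' j ≤ (C : ℝ)) ∧ (∀ i, TUIsInt (x' i)) ∧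
      ∑ i, p i * x i ≤ ∑ i, p i * x' i := by
  intro N
  induction N with
  | zero => intro x _ _ _ h; exact absurd h (Nat.not_lt_zero _)
  | succ N ih =>
    intro x hx0 hxu hxC hμ
    by_cases hF : TUFrac x = ∅
    · refine ⟨x, hx0, hxu, hxC, ?_, le_refl _⟩
      intro i
      have : i ∉ TUFrac x := by rw [hF]; exact Finset.notMem_empty i
      have := fun h => this (Finset.mem_filter.mpr ⟨Finset.mem_univ i, h⟩)
      exact not_not.mp this
    · have hFne : (TUFrac x).Nonempty := Finset.nonempty_iff_ne_empty.mpr hF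
      by_cases hA : ∃ d : Fin n → ℝ, d ≠ 0 ∧ (∀ i, i ∉ TUFrac x → d i = 0) ∧
          (∀ i, (∑ j ∈ TUrow s e i, x j = (C : ℝ)) → ∑ j ∈ TUrow s e i, d j = 0)
      · obtain ⟨d, hdne, hsupp, horth⟩ := hA
        -- choose the sign of the direction so the objective does not decrease
        obtain ⟨d', hdne', hsupp', horth', hpd'⟩ :
            ∃ d' : Fin n → ℝ, d' ≠ 0 ∧ (∀ i, i ∉ TUFrac x → d' i = 0) ∧
              (∀ i, (∑ j ∈ TUrow s e i, x j = (C : ℝ)) → ∑ j ∈ TUrow s e i, d' j = 0) ∧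
              0 ≤ ∑ i, p i * d' i := by
          rcases le_or_gt 0 (∑ i, p i * d i) with h | h
          · exact ⟨d, hdne, hsupp, horth, h⟩
          · refine ⟨-d, neg_ne_zero.mpr hdne, fun i hi => by simp [hsupp i hi], ?_, ?_⟩
            · intro i hi
              simp only [Pi.neg_apply, Finset.sum_neg_distrib]
              rw [horth i hi, neg_zero]
            · have : ∑ i, p i * (-d) i = -∑ i, p i * d i := by
                simp [Finset.sum_neg_distrib, mul_neg]
              rw [this]
              linarith
        obtain ⟨x', h0', hu', hC', hobj', hfsub', htpres', hstrict'⟩ :=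
          TU_pivot s e u C p x hx0 hxu hxC d' hdne' hsupp' horth' hpd'
        -- measure decreases
        have htsub : TUTight s e C x ⊆ TUTight s e C x' := by
          intro i hi
          have := (Finset.mem_filter.mp hi).2
          exact Finset.mem_filter.mpr ⟨Finset.mem_univ _, htpres' i this⟩
        have hcard1 : (TUFrac x').card ≤ (TUFrac x).card := Finset.card_le_card hfsub'
        have hcard2 : (TUTight s e C x).card ≤ (TUTight s e C x').card :=
          Finset.card_le_card htsub
        have hTle : (TUTight s e C x').card ≤ n := by
          have := Finset.card_le_univ (TUTight s e C x')
          simpa using this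
        have hTle2 : (TUTight s e C x).card ≤ n := by
          have := Finset.card_le_univ (TUTight s e C x)
          simpa using this
        have hμ' : (TUFrac x').card * (n + 1) + (n - (TUTight s e C x').card) < N := by
          rcases hstrict' with hlt | ⟨i0, hi0n, hi0t⟩
          · have h1 : (TUFrac x').card < (TUFrac x).card := Finset.card_lt_card hlt
            have h2 : ((TUFrac x').card + 1) * (n + 1) ≤ (TUFrac x).card * (n + 1) :=
              Nat.mul_le_mul_right _ (by omega)
            have h3 : (TUFrac x').card * (n + 1) + (n - (TUTight s e C x').card)
                < ((TUFrac x').card + 1) * (n + 1) := by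
              have : n - (TUTight s e C x').card ≤ n := Nat.sub_le _ _
              nlinarith
            omega
          · have hi0T' : i0 ∈ TUTight s e C x' :=
              Finset.mem_filter.mpr ⟨Finset.mem_univ _, hi0t⟩
            have hi0T : i0 ∉ TUTight s e C x := by
              intro hmem
              exact hi0n (Finset.mem_filter.mp hmem).2
            have hss : TUTight s e C x ⊂ TUTight s e C x' :=
              (Finset.ssubset_iff_of_subset htsub).mpr ⟨i0, hi0T', hi0T⟩
            have h1 : (TUTight s e C x).card < (TUTight s e C x').card :=
              Finset.card_lt_card hss
            have h2 : (TUFrac x').card * (n + 1) ≤ (TUFrac x).card * (n + 1) :=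
              Nat.mul_le_mul_right _ hcard1
            omega
        obtain ⟨x'', h0'', hu'', hC'', hint'', hobj''⟩ := ih x' h0' hu' hC' hμ'
        exact ⟨x'', h0'', hu'', hC'', hint'', le_trans hobj' hobj''⟩
      · exfalso
        apply TU_caseB s e C x hFne (TUTight s e C x).card (TUTight s e C x) le_rfl
        · intro i hi
          exact (Finset.mem_filter.mp hi).2
        · intro d h1 h2
          by_contra hd0
          exact hA ⟨d, hd0, h1, fun i hi =>
            h2 i (Finset.mem_filter.mpr ⟨Finset.mem_univ _, hi⟩)⟩

lemma TU_feas_all (s e : Fin n → ℝ) (C : ℕ) (x : Fin n → ℝ) (hx0 : ∀ i, 0 ≤ x i)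
    (hxC : ∀ i, ∑ j ∈ TUrow s e i, x j ≤ (C : ℝ)) (t : ℝ) :
    ∑ i ∈ univ.filter (fun i => s i ≤ t ∧ t < e i), x i ≤ (C : ℝ) := by
  set S := univ.filter (fun i => s i ≤ t ∧ t < e i) with hS
  rcases S.eq_empty_or_nonempty with hSe | hSne
  · rw [hSe]
    simp
  · obtain ⟨j, hjS, hjmax⟩ := Finset.exists_max_image S (fun i => s i) hSne
    obtain ⟨-, hjs, hje⟩ := Finset.mem_filter.mp hjS
    have hsub : S ⊆ TUrow s e j := by
      intro i hiS
      obtain ⟨-, his, hie⟩ := Finset.mem_filter.mp hiS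
      refine Finset.mem_filter.mpr ⟨Finset.mem_univ _, hjmax i hiS, ?_⟩
      exact lt_of_le_of_lt hjs hie
    calc ∑ i ∈ S, x i ≤ ∑ i ∈ TUrow s e j, x i :=
          Finset.sum_le_sum_of_subset_of_nonneg hsub (fun i _ _ => hx0 i)
      _ ≤ (C : ℝ) := hxC j

theorem stmt_10 {n : ℕ} (s e : Fin n → ℝ) (hse : ∀ i, s i < e i)
    (u : Fin n → ℕ) (C : ℕ) (p : Fin n → ℝ) (hp : ∀ i, 0 ≤ p i)
    (x : Fin n → ℝ)
    (hx0 : ∀ i, 0 ≤ x i) (hxu : ∀ i, x i ≤ u i)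
    (hxC : ∀ t : ℝ, ∑ i ∈ Finset.univ.filter (fun i => s i ≤ t ∧ t < e i), x i ≤ C) :
    ∃ y : Fin n → ℕ,
      (∀ i, y i ≤ u i) ∧
      (∀ t : ℝ, ∑ i ∈ Finset.univ.filter (fun i => s i ≤ t ∧ t < e i), y i ≤ C) ∧
      ∑ i, p i * x i ≤ ∑ i, p i * y i := by
  have hrowC : ∀ i, ∑ j ∈ TUrow s e i, x j ≤ (C : ℝ) := fun i => hxC (s i)
  obtain ⟨x', h0', hu', hC', hint', hobj'⟩ := TU_main s e u C p
    ((TUFrac x).card * (n + 1) + (n - (TUTight s e C x).card) + 1) x hx0 hxu hrowC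
    (Nat.lt_succ_self _)
  -- convert to natural numbers
  have hz : ∀ i, ∃ m : ℕ, x' i = (m : ℝ) := by
    intro i
    obtain ⟨z, hzi⟩ := hint' i
    have hz0 : 0 ≤ z := by
      have := h0' i
      rw [hzi] at this
      exact_mod_cast this
    refine ⟨z.toNat, by rw [hzi]; exact_mod_cast (congrArg (Int.cast : ℤ → ℝ) (Int.toNat_of_nonneg hz0)).symm⟩
  choose y hy using hz
  refine ⟨y, ?_, ?_, ?_⟩
  · intro i
    have := hu' i
    rw [hy i] at this
    exact_mod_cast this
  · intro t
    have hall := TU_feas_all s e C x' h0' hC' t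
    have hcast : ((∑ i ∈ Finset.univ.filter (fun i => s i ≤ t ∧ t < e i), y i : ℕ) : ℝ)
        = ∑ i ∈ Finset.univ.filter (fun i => s i ≤ t ∧ t < e i), x' i := by
      push_cast
      exact Finset.sum_congr rfl (fun i _ => (hy i).symm)
    have : ((∑ i ∈ Finset.univ.filter (fun i => s i ≤ t ∧ t < e i), y i : ℕ) : ℝ) ≤ (C : ℝ) := by
      rw [hcast]; exact hall
    exact_mod_cast this
  · calc ∑ i, p i * x i ≤ ∑ i, p i * x' i := hobj'
      _ = ∑ i, p i * (y i : ℝ) := Finset.sum_congr rfl (fun i _ => by rw [hy i])
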